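/- Let X be a dense linear subspace of ℓ²(S), and let S' ⊆ S be such that X↓S' is dense in ℓ²(S)↓S'. Then X↓S' fails to be an orthogonal direct summand of X if and only if there exists a ∈ X such that the truncation a↓S' (a restricted to S', extended by zero) does not belong to X. -/

import Mathlib

noncomputable section
open scoped InnerProductSpace ENNReal

/-- An orthonormal subset of an inner product space. -/
def OrthSet (k : Type*) {E : Type*} [RCLike k] [NormedAddCommGroup E]
    [InnerProductSpace k E] (B : Set E) : Prop :=
  Orthonormal k ((↑) : B → E)

/-- A maximal orthonormal system of the whole space. -/
def MaximalOrthSet (k : Type*) {E : Type*} [RCLike k] [NormedAddCommGroup E]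
    [InnerProductSpace k E] (B : Set E) : Prop :=
  OrthSet k B ∧ ∀ C : Set E, B ⊆ C → OrthSet k C → C = B

/-- An orthonormal basis (as a set): an orthonormal system whose linear span is dense. -/
def IsOrthBasisSet (k : Type*) {E : Type*} [RCLike k] [NormedAddCommGroup E]
    [InnerProductSpace k E] (B : Set E) : Prop :=
  OrthSet k B ∧ Dense (Submodule.span k B : Set E)

/-- The space has an orthonormal basis (is non-pathological). -/
def HasOrthBasis (k E : Type*) [RCLike k] [NormedAddCommGroup E]
    [InnerProductSpace k E] : Prop :=
  ∃ B : Set E, IsOrthBasisSet k B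

/-- Density: least cardinality of a dense subset. -/
def densityCard (E : Type*) [TopologicalSpace E] : Cardinal :=
  sInf { c | ∃ D : Set E, Dense D ∧ Cardinal.mk D = c }

/-- A maximal orthonormal system of a subspace `X`. -/
def MaximalOrthIn (k : Type*) {E : Type*} [RCLike k] [NormedAddCommGroup E]
    [InnerProductSpace k E] (X : Submodule k E) (B : Set E) : Prop :=
  B ⊆ X ∧ OrthSet k B ∧ ∀ C : Set E, C ⊆ X → B ⊆ C → OrthSet k C → C = B

/-- An orthonormal basis of the subspace `X`: an orthonormal subset of `X`
whose linear span is dense in `X`. -/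
def IsOrthBasisOf (k : Type*) {E : Type*} [RCLike k] [NormedAddCommGroup E]
    [InnerProductSpace k E] (X : Submodule k E) (B : Set E) : Prop :=
  B ⊆ X ∧ OrthSet k B ∧ (X : Set E) ⊆ closure (Submodule.span k B : Set E)

/-- `X₀` is an orthogonal direct summand of `X`. -/
def IsOrthSummand (k : Type*) {E : Type*} [RCLike k] [NormedAddCommGroup E]
    [InnerProductSpace k E] (X X₀ : Submodule k E) : Prop :=
  ∃ X'' : Submodule k E, X'' ≤ X ∧ (∀ u ∈ X₀, ∀ v ∈ X'', (inner k u v : k) = 0) ∧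
    X₀ ⊔ X'' = X

/-- The closed subspace of `ℓ²(S)` of vectors with support contained in `A`. -/
def lpRes (k : Type*) {S : Type*} [RCLike k] (A : Set S) :
    Submodule k (lp (fun _ : S => k) 2) where
  carrier := {u | ∀ s ∉ A, u s = 0}
  zero_mem' := by intro s _; simp
  add_mem' := by intro a b ha hb s hs; simp [lp.coeFn_add, ha s hs, hb s hs]
  smul_mem' := by intro c a ha s hs; simp [lp.coeFn_smul, ha s hs]

/-- The truncation `u↓A` of `u ∈ ℓ²(S)` to a subset `A ⊆ S`. -/
def lpTrunc {k : Type*} {S : Type*} [RCLike k] (u : lp (fun _ : S => k) 2) (A : Set S) :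
    lp (fun _ : S => k) 2 :=
  ⟨A.indicator ⇑u, by
    refine memℓp_gen ?_
    have hs : Summable fun s => ‖u s‖ ^ (2 : ℝ≥0∞).toReal :=
      (memℓp_gen_iff (by norm_num)).1 (lp.memℓp u)
    refine hs.of_nonneg_of_le (fun s => by positivity) (fun s => ?_)
    by_cases hsA : s ∈ A
    · simp [Set.indicator, hsA]
    · simp only [Set.indicator, hsA, if_false, norm_zero]
      rw [Real.zero_rpow (by norm_num)]
      positivity⟩

/-- `X↓S'` fails to be an orthogonal direct summand of `X` iff some
`a ∈ X` has truncation `a↓S' ∉ X`. -/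
theorem stmt16 {k : Type*} [RCLike k] {S : Type*}
    (X : Submodule k (lp (fun _ : S => k) 2))
    (hX : Dense (X : Set (lp (fun _ : S => k) 2)))
    (S' : Set S)
    (hdense : (lpRes k S' : Set (lp (fun _ : S => k) 2)) ⊆
      closure ((X ⊓ lpRes k S' : Submodule k (lp (fun _ : S => k) 2)) :
        Set (lp (fun _ : S => k) 2))) :
    ¬ IsOrthSummand k X (X ⊓ lpRes k S') ↔ ∃ a ∈ X, lpTrunc a S' ∉ X := by
  classical
  have hcoe : ∀ (u : lp (fun _ : S => k) 2) (s : S),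
      (lpTrunc u S') s = S'.indicator (⇑u) s := fun u s => rfl
  constructor
  · contrapose!
    intro htr
    refine ⟨X ⊓ lpRes k S'ᶜ, inf_le_left, ?_, ?_⟩
    · rintro u hu v hv
      rw [lp.inner_eq_tsum]
      have hz : ∀ s : S, (inner k (u s) (v s) : k) = 0 := by
        intro s
        by_cases hsS : s ∈ S'
        · have : v s = 0 := (Submodule.mem_inf.1 hv).2 s (by simpa using hsS)
          simp [this]
        · have : u s = 0 := (Submodule.mem_inf.1 hu).2 s hsS
          simp [this]
      simp only [RCLike.inner_apply] at hz
      simp [hz]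
    · refine le_antisymm (sup_le inf_le_left inf_le_left) ?_
      intro a ha
      have h1 : lpTrunc a S' ∈ X ⊓ lpRes k S' :=
        Submodule.mem_inf.2 ⟨htr a ha, fun s hs => by
          simp [hcoe, Set.indicator_of_notMem hs]⟩
      have h2 : a - lpTrunc a S' ∈ X ⊓ lpRes k S'ᶜ :=
        Submodule.mem_inf.2 ⟨X.sub_mem ha (htr a ha), fun s hs => by
          have hsS : s ∈ S' := not_not.1 hs
          simp [lp.coeFn_sub, hcoe, Set.indicator_of_mem hsS]⟩
      have := Submodule.add_mem_sup h1 h2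
      simpa using this
  · rintro ⟨a, ha, hta⟩ ⟨X'', hle, horth, hsum⟩
    have haX : a ∈ (X ⊓ lpRes k S') ⊔ X'' := by rw [hsum]; exact ha
    obtain ⟨b, hb, c, hc, habc⟩ := Submodule.mem_sup.1 haX
    have hcz : ∀ s ∈ S', c s = 0 := by
      intro s hs
      have hclosed : IsClosed {v : lp (fun _ : S => k) 2 | (inner k v c : k) = 0} :=
        isClosed_eq (Continuous.inner continuous_id continuous_const) continuous_const
      have hsub : ((X ⊓ lpRes k S' : Submodule k (lp (fun _ : S => k) 2)) :
          Set (lp (fun _ : S => k) 2)) ⊆ {v | (inner k v c : k) = 0} :=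
        fun v hv => horth v hv c hc
      have hclsub : (lpRes k S' : Set (lp (fun _ : S => k) 2)) ⊆
          {v | (inner k v c : k) = 0} :=
        fun v hv => hclosed.closure_subset_iff.2 hsub (hdense hv)
      have hes : lp.single 2 s (1 : k) ∈ lpRes k S' := by
        intro t ht
        have hts : t ≠ s := fun h => ht (h ▸ hs)
        exact lp.single_apply_ne (E := fun _ : S => k) 2 s (1 : k) hts
      have := hclsub hes
      simpa [lp.inner_single_left] using this
    apply hta
    have hbeq : lpTrunc a S' = b := by
      apply lp.ext
      funext s
      by_cases hsS : s ∈ S'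
      · have : a s = b s + c s := by rw [← habc]; simp [lp.coeFn_add]
        rw [hcoe, Set.indicator_of_mem hsS, this, hcz s hsS, add_zero]
      · have hbz : b s = 0 := (Submodule.mem_inf.1 hb).2 s hsS
        rw [hcoe, Set.indicator_of_notMem hsS, hbz]
    rw [hbeq]
    exact (Submodule.mem_inf.1 hb).1
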